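/- The order n of a periodic T-system (a continuous T-system on the unit circle S¹ = {(x,y) ∈ ℝ² : x² + y² = 1}) is even. -/

import Mathlib

/-- A family `F = {f_0, ..., f_n}` of real-valued functions on `X` is a T-system of
order `n` if every nontrivial linear combination has at most `n` zeros in `X`. -/
def IsTSystem {X : Type*} (n : ℕ) (F : Fin (n + 1) → X → ℝ) : Prop :=
  ∀ a : Fin (n + 1) → ℝ, a ≠ 0 →
    {x : X | ∑ i, a i * F i x = 0}.encard ≤ (n : ℕ∞)

open Real Set

/-- point on the unit circle at angle θ -/
noncomputable def circlePt (θ : ℝ) : {p : ℝ × ℝ // p.1 ^ 2 + p.2 ^ 2 = 1} :=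
  ⟨(Real.cos θ, Real.sin θ), by simp [Real.cos_sq_add_sin_sq]⟩

lemma continuous_circlePt : Continuous circlePt :=
  (Real.continuous_cos.prodMk Real.continuous_sin).subtype_mk _

lemma circlePt_inj {θ ψ : ℝ} (h : circlePt θ = circlePt ψ) :
    ∃ k : ℤ, θ - ψ = 2 * π * k := by
  have h1 : Real.cos θ = Real.cos ψ := congrArg (fun p => p.1.1) h
  have h2 : Real.sin θ = Real.sin ψ := congrArg (fun p => p.1.2) h
  exact Real.Angle.angle_eq_iff_two_pi_dvd_sub.1 (Real.Angle.cos_sin_inj h1 h2)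

lemma circlePt_two_pi : circlePt (2 * π) = circlePt 0 := by
  simp [circlePt]

/-- The order of a periodic T-system (a continuous T-system on the unit circle) is even. -/
theorem stmt8 (n : ℕ)
    (F : Fin (n + 1) → {p : ℝ × ℝ // p.1 ^ 2 + p.2 ^ 2 = 1} → ℝ)
    (hcont : ∀ i, Continuous (F i))
    (hT : IsTSystem n F) :
    Even n := by
  by_contra hodd
  rw [Nat.not_even_iff_odd] at hodd
  set α : ℝ := 2 * π / (n + 1) with hα
  have hn1 : (0:ℝ) < (n:ℝ) + 1 := by positivity
  -- points and matrix
  set g : ℝ → Fin (n + 1) → {p : ℝ × ℝ // p.1 ^ 2 + p.2 ^ 2 = 1} :=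
    fun t j => circlePt (((j : ℕ) + t) * α) with hg
  set M : ℝ → Matrix (Fin (n + 1)) (Fin (n + 1)) ℝ :=
    fun t => Matrix.of fun i j => F i (g t j) with hM
  -- points are pairwise distinct
  have hginj : ∀ t, Function.Injective (g t) := by
    intro t j k hjk
    obtain ⟨m, hm⟩ := circlePt_inj hjk
    have hπ : (0:ℝ) < π := Real.pi_pos
    have : ((j : ℕ) + t) * α - ((k : ℕ) + t) * α = ((j : ℕ) - (k : ℕ) : ℝ) * α := by ring
    rw [this, hα] at hm
    have hjk' : ((j : ℕ) - (k : ℕ) : ℝ) = ((n:ℝ) + 1) * m := by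
      field_simp at hm
      have h2π : 2 * π ≠ 0 := by positivity
      nlinarith [hm]
    have hjlt : ((j:ℕ):ℝ) < (n:ℝ) + 1 := by exact_mod_cast Nat.cast_lt.2 j.isLt
    have hklt : ((k:ℕ):ℝ) < (n:ℝ) + 1 := by exact_mod_cast Nat.cast_lt.2 k.isLt
    have hjpos : (0:ℝ) ≤ ((j:ℕ):ℝ) := Nat.cast_nonneg _
    have hkpos : (0:ℝ) ≤ ((k:ℕ):ℝ) := Nat.cast_nonneg _
    have hmabs : |((j : ℕ) - (k : ℕ) : ℝ)| < (n:ℝ) + 1 := by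
      rw [abs_sub_lt_iff]
      constructor <;> linarith
    have hm0 : m = 0 := by
      by_contra hm0
      have : (1:ℝ) ≤ |(m:ℝ)| := by
        have : (1:ℤ) ≤ |m| := Int.one_le_abs hm0
        exact_mod_cast this
      rw [hjk', abs_mul, abs_of_pos hn1] at hmabs
      nlinarith
    rw [hm0] at hjk'
    have heq : ((j:ℕ):ℝ) = ((k:ℕ):ℝ) := by push_cast at hjk' ⊢; linarith
    have : (j : ℕ) = (k : ℕ) := by exact_mod_cast heq
    exact Fin.ext this
  -- the determinant never vanishes
  have hdet : ∀ t, (M t).det ≠ 0 := by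
    intro t hdet0
    obtain ⟨v, hv0, hv⟩ := Matrix.exists_vecMul_eq_zero_iff.2 hdet0
    have hzero : ∀ j, ∑ i, v i * F i (g t j) = 0 := by
      intro j
      have := congrFun hv j
      simpa [Matrix.vecMul, dotProduct, hM] using this
    have hsub : Set.range (g t) ⊆ {x | ∑ i, v i * F i x = 0} := by
      rintro x ⟨j, rfl⟩; exact hzero j
    have hcard : (Set.range (g t)).encard = (n + 1 : ℕ) := by
      rw [← Set.image_univ, Set.InjOn.encard_image ((hginj t).injOn)]
      rw [Set.encard_univ]
      simp [ENat.card_eq_coe_fintype_card]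
    have hle := hT v hv0
    have := (Set.encard_le_encard hsub).trans hle
    rw [hcard] at this
    have : (n + 1 : ℕ) ≤ (n : ℕ) := by exact_mod_cast this
    omega
  -- continuity of the determinant
  have hcontdet : Continuous fun t => (M t).det := by
    apply Continuous.matrix_det
    apply continuous_matrix
    intro i j
    exact (hcont i).comp (continuous_circlePt.comp (by continuity))
  -- the shift identity
  have hshift : M 1 = (M 0).submatrix id (finRotate (n + 1)) := by
    ext i j
    simp only [Matrix.submatrix_apply, id_eq, hM, Matrix.of_apply]
    congr 1
    rw [finRotate_succ_apply]
    show circlePt (((j : ℕ) + 1) * α) = circlePt ((((j + 1 : Fin (n+1)) : ℕ) + 0) * α)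
    rcases eq_or_ne j (Fin.last n) with hj | hj
    · subst hj
      have : ((Fin.last n + 1 : Fin (n+1)) : ℕ) = 0 := by
        simp
      rw [this]
      have hval : ((Fin.last n : ℕ) + 1 : ℝ) * α = 2 * π := by
        simp only [Fin.val_last, hα]
        field_simp
      rw [hval]
      simpa using circlePt_two_pi
    · have : ((j + 1 : Fin (n+1)) : ℕ) = (j : ℕ) + 1 := by
        rw [Fin.val_add_one]
        simp [hj]
      rw [this]
      norm_num
  -- sign flip
  have hflip : (M 1).det = -(M 0).det := by
    rw [hshift, Matrix.det_permute', sign_finRotate, Nat.add_sub_cancel, Odd.neg_one_pow hodd]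
    push_cast
    ring
  -- IVT contradiction
  have h0 := hdet 0
  have : (0:ℝ) ∈ Set.uIcc ((M 0).det) ((M 1).det) := by
    rw [hflip]
    rcases lt_or_gt_of_ne h0 with h | h
    · exact Set.mem_uIcc.2 (Or.inl ⟨le_of_lt h, by linarith⟩)
    · exact Set.mem_uIcc.2 (Or.inr ⟨by linarith, le_of_lt h⟩)
  obtain ⟨t, _, ht⟩ := intermediate_value_uIcc (hcontdet.continuousOn (s := Set.uIcc 0 1)) this
  exact hdet t ht
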